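/- Let γ : ℝ → E be a unit-speed curve and v₂, v₃ : ℝ → E differentiable maps such that for every t the vectors {γ'(t), v₂(t), v₃(t)} are orthonormal, and suppose there are positive functions κ₁, κ₂ : ℝ → ℝ with γ''(t) = κ₁(t)·v₂(t), v₂'(t) = -κ₁(t)·γ'(t) + κ₂(t)·v₃(t), and v₃'(t) = -κ₂(t)·v₂(t) (Frenet curve of osculating order 3). If γ is a Legendre curve, i.e. γ'_{2n+α}(t) = 0 for all t and all α ∈ {1,…,s}, then also (v₂(t))_{2n+α} = 0 and (v₃(t))_{2n+α} = 0 for all t and all α; that is, each ξ_α = e_{2n+α} is orthogonal to the span of {T, v₂, v₃}. -/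

import Mathlib

open scoped RealInnerProductSpace

/-- The structure tensor `φ` of the standard `C`-manifold structure on `ℝ^{2n+s}`:
`(φv)_i = v_{n+i}`, `(φv)_{n+i} = -v_i` for `0 ≤ i < n`, and `(φv)_{2n+α} = 0`. -/
noncomputable def phi (n s : ℕ) (v : EuclideanSpace ℝ (Fin (2*n+s))) :
    EuclideanSpace ℝ (Fin (2*n+s)) := WithLp.toLp 2 fun k =>
  if _h1 : (k : ℕ) < n then v ⟨n + (k : ℕ), by omega⟩
  else if _h2 : (k : ℕ) < 2*n then -v ⟨(k : ℕ) - n, by omega⟩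
  else 0

/-- The index `2n+α` of the characteristic direction `ξ_α = e_{2n+α}`. -/
def idxA (n s : ℕ) (α : Fin s) : Fin (2*n+s) := ⟨2*n + (α : ℕ), by omega⟩

/-- The index `i` for `1 ≤ i ≤ n` (0-based). -/
def idxI (n s : ℕ) (i : Fin n) : Fin (2*n+s) := ⟨(i : ℕ), by omega⟩

/-- The index `n+i` for `1 ≤ i ≤ n` (0-based). -/
def idxNI (n s : ℕ) (i : Fin n) : Fin (2*n+s) := ⟨n + (i : ℕ), by omega⟩


lemma deriv_comp_proj {m : ℕ} (f : ℝ → EuclideanSpace ℝ (Fin m))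
    (hf : Differentiable ℝ f) (k : Fin m) (t : ℝ) :
    deriv (fun u => f u k) t = deriv f t k := by
  have h := ((EuclideanSpace.proj k).hasFDerivAt.comp_hasDerivAt t
    (hf t).hasDerivAt)
  simpa [Function.comp_def] using h.deriv

/-- For a Legendre Frenet curve of osculating order 3 in the standard `C`-manifold
`ℝ^{2n+s}`, each `ξ_α = e_{2n+α}` is orthogonal to the span of `{T, v₂, v₃}`. -/
theorem legendre_frenet_curve_xi_orthogonal_frame
    (n s : ℕ) (hn : 0 < n) (hs : 0 < s)
    (γ v₂ v₃ : ℝ → EuclideanSpace ℝ (Fin (2*n+s)))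
    (hγ : Differentiable ℝ γ) (hγ' : Differentiable ℝ (deriv γ))
    (hv₂ : Differentiable ℝ v₂) (hv₃ : Differentiable ℝ v₃)
    (hunit : ∀ t : ℝ, ‖deriv γ t‖ = 1)
    (horth : ∀ t : ℝ, ‖v₂ t‖ = 1 ∧ ‖v₃ t‖ = 1 ∧
      ⟪deriv γ t, v₂ t⟫ = 0 ∧ ⟪deriv γ t, v₃ t⟫ = 0 ∧ ⟪v₂ t, v₃ t⟫ = 0)
    (κ₁ κ₂ : ℝ → ℝ) (hκ₁pos : ∀ t : ℝ, 0 < κ₁ t) (hκ₂pos : ∀ t : ℝ, 0 < κ₂ t)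
    (hfr1 : ∀ t : ℝ, deriv (deriv γ) t = κ₁ t • v₂ t)
    (hfr2 : ∀ t : ℝ, deriv v₂ t = (-κ₁ t) • deriv γ t + κ₂ t • v₃ t)
    (hfr3 : ∀ t : ℝ, deriv v₃ t = (-κ₂ t) • v₂ t)
    (hleg : ∀ t : ℝ, ∀ α : Fin s, deriv γ t (idxA n s α) = 0) :
    ∀ t : ℝ, ∀ α : Fin s, v₂ t (idxA n s α) = 0 ∧ v₃ t (idxA n s α) = 0 := by
  intro t α
  have hv2 : ∀ u : ℝ, v₂ u (idxA n s α) = 0 := by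
    intro u
    have h1 : deriv (fun w => deriv γ w (idxA n s α)) u = 0 := by
      have : (fun w => deriv γ w (idxA n s α)) = fun _ => (0 : ℝ) := by
        funext w; exact hleg w α
      rw [this]; simp
    rw [deriv_comp_proj (deriv γ) hγ' _ u, hfr1 u] at h1
    have := hκ₁pos u
    simpa [PiLp.smul_apply, smul_eq_mul, this.ne'] using h1
  refine ⟨hv2 t, ?_⟩
  have h1 : deriv (fun w => v₂ w (idxA n s α)) t = 0 := by
    have : (fun w => v₂ w (idxA n s α)) = fun _ => (0 : ℝ) := by
      funext w; exact hv2 w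
    rw [this]; simp
  rw [deriv_comp_proj v₂ hv₂ _ t, hfr2 t] at h1
  have hk := hκ₂pos t
  simpa [PiLp.add_apply, PiLp.smul_apply, smul_eq_mul, hleg t α, hk.ne'] using h1
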